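/- The set of LF correlations is a strict superset of the set of LHV correlations in the 3-setting, 2-outcome bipartite scenario: every LHV correlation is an LF correlation, and there exists an LF correlation (e.g., the extreme point ℘^Ext_LF combining deterministic first settings with a PR box on settings 2,3) that is not an LHV correlation. -/

import Mathlib

/-- The LF conditions for the 3-setting, 2-outcome scenario (outcomes encoded
by `Bool`, setting "1" is index `0 : Fin 3`). -/
def IsLF (℘ : Bool → Bool → Fin 3 → Fin 3 → ℝ) : Prop :=
  ∃ (Pcd : Bool → Bool → ℝ)
    (Pb : Bool → Bool → Bool → Fin 3 → ℝ)
    (Pa : Bool → Bool → Bool → Fin 3 → ℝ)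
    (PNS : Bool → Bool → Bool → Bool → Fin 3 → Fin 3 → ℝ),
    (∀ c d, 0 ≤ Pcd c d) ∧ (∑ c : Bool, ∑ d : Bool, Pcd c d = 1) ∧
    (∀ b c d y, 0 ≤ Pb b c d y) ∧ (∀ c d y, ∑ b : Bool, Pb b c d y = 1) ∧
    (∀ a c d x, 0 ≤ Pa a c d x) ∧ (∀ c d x, ∑ a : Bool, Pa a c d x = 1) ∧
    (∀ a b c d x y, 0 ≤ PNS a b c d x y) ∧
    (∀ c d x y, ∑ a : Bool, ∑ b : Bool, PNS a b c d x y = 1) ∧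
    (∀ b c d x x' y, ∑ a : Bool, PNS a b c d x y = ∑ a : Bool, PNS a b c d x' y) ∧
    (∀ a c d x y y', ∑ b : Bool, PNS a b c d x y = ∑ b : Bool, PNS a b c d x y') ∧
    (∀ a b y, ℘ a b 0 y
      = ∑ c : Bool, ∑ d : Bool, (if a = c then (1:ℝ) else 0) * Pb b c d y * Pcd c d) ∧
    (∀ a b x, ℘ a b x 0
      = ∑ c : Bool, ∑ d : Bool, (if b = d then (1:ℝ) else 0) * Pa a c d x * Pcd c d) ∧
    (∀ a b x y, x ≠ 0 → y ≠ 0 →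
      ℘ a b x y = ∑ c : Bool, ∑ d : Bool, PNS a b c d x y * Pcd c d)

/-- LHV model for the 3-setting, 2-outcome scenario: a mixture over a finite
probability space of deterministic assignments. -/
def IsLHV (℘ : Bool → Bool → Fin 3 → Fin 3 → ℝ) : Prop :=
  ∃ (m : ℕ) (P : Fin m → ℝ) (A B : Fin 3 → Fin m → Bool),
    (∀ l, 0 ≤ P l) ∧ (∑ l, P l = 1) ∧
    ∀ a b x y, ℘ a b x y
      = ∑ l, (if a = A x l then (1:ℝ) else 0) * (if b = B y l then (1:ℝ) else 0) * P l

section Aux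

lemma tri_swap {m : ℕ} (f : Bool → Bool → Fin m → ℝ) :
    (∑ c : Bool, ∑ d : Bool, ∑ l, f c d l) = ∑ l, ∑ c : Bool, ∑ d : Bool, f c d l := by
  calc (∑ c : Bool, ∑ d : Bool, ∑ l, f c d l)
      = ∑ c : Bool, ∑ l, ∑ d : Bool, f c d l :=
        Finset.sum_congr rfl fun c _ => Finset.sum_comm
    _ = ∑ l, ∑ c : Bool, ∑ d : Bool, f c d l := Finset.sum_comm

lemma lhv_isLF (℘ : Bool → Bool → Fin 3 → Fin 3 → ℝ) (h : IsLHV ℘) : IsLF ℘ := by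
  classical
  obtain ⟨m, P, A, B, hP0, hP1, h℘⟩ := h
  set q : Bool → Bool → Fin m → ℝ := fun c d l =>
    (if c = A 0 l then (1:ℝ) else 0) * (if d = B 0 l then (1:ℝ) else 0) * P l with hq
  set Q : Bool → Bool → ℝ := fun c d => ∑ l, q c d l with hQ
  have hq0 : ∀ c d l, 0 ≤ q c d l := by
    intro c d l; simp only [hq]; split_ifs <;> simp [hP0 l]
  have hQ0 : ∀ c d, 0 ≤ Q c d := fun c d => Finset.sum_nonneg fun l _ => hq0 c d l
  have hq_zero : ∀ c d, Q c d = 0 → ∀ l, q c d l = 0 := by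
    intro c d h l
    exact (Finset.sum_eq_zero_iff_of_nonneg (fun l _ => hq0 c d l)).mp h l (Finset.mem_univ l)
  have hqsumd : ∀ (c : Bool) (l : Fin m),
      ∑ d : Bool, q c d l = (if c = A 0 l then (1:ℝ) else 0) * P l := by
    intro c l
    simp only [hq]
    cases c <;> cases A 0 l <;> cases B 0 l <;> simp [Fintype.sum_bool]
  have hqsumc : ∀ (d : Bool) (l : Fin m),
      ∑ c : Bool, q c d l = (if d = B 0 l then (1:ℝ) else 0) * P l := by
    intro d l
    simp only [hq]
    cases d <;> cases A 0 l <;> cases B 0 l <;> simp [Fintype.sum_bool]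
  have hq1 : ∀ l : Fin m, ∑ c : Bool, ∑ d : Bool, q c d l = P l := by
    intro l
    simp only [hq]
    cases A 0 l <;> cases B 0 l <;> simp [Fintype.sum_bool]
  set N : Bool → Bool → Bool → Fin 3 → ℝ := fun b c d y =>
    ∑ l, q c d l * (if b = B y l then 1 else 0) with hN
  set M : Bool → Bool → Bool → Fin 3 → ℝ := fun a c d x =>
    ∑ l, q c d l * (if a = A x l then 1 else 0) with hM
  set K : Bool → Bool → Bool → Bool → Fin 3 → Fin 3 → ℝ := fun a b c d x y =>
    ∑ l, q c d l * (if a = A x l then 1 else 0) * (if b = B y l then 1 else 0) with hK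
  have hN0 : ∀ b c d y, 0 ≤ N b c d y := by
    intro b c d y
    refine Finset.sum_nonneg fun l _ => mul_nonneg (hq0 c d l) ?_
    split_ifs <;> norm_num
  have hM0 : ∀ a c d x, 0 ≤ M a c d x := by
    intro a c d x
    refine Finset.sum_nonneg fun l _ => mul_nonneg (hq0 c d l) ?_
    split_ifs <;> norm_num
  have hK0 : ∀ a b c d x y, 0 ≤ K a b c d x y := by
    intro a b c d x y
    refine Finset.sum_nonneg fun l _ => mul_nonneg (mul_nonneg (hq0 c d l) ?_) ?_ <;>
      (split_ifs <;> norm_num)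
  have hNz : ∀ b c d y, Q c d = 0 → N b c d y = 0 := by
    intro b c d y h
    refine Finset.sum_eq_zero fun l _ => ?_
    rw [hq_zero c d h l, zero_mul]
  have hMz : ∀ a c d x, Q c d = 0 → M a c d x = 0 := by
    intro a c d x h
    refine Finset.sum_eq_zero fun l _ => ?_
    rw [hq_zero c d h l, zero_mul]
  have hKz : ∀ a b c d x y, Q c d = 0 → K a b c d x y = 0 := by
    intro a b c d x y h
    refine Finset.sum_eq_zero fun l _ => ?_
    rw [hq_zero c d h l, zero_mul, zero_mul]
  have hNQ : ∀ c d y, ∑ b : Bool, N b c d y = Q c d := by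
    intro c d y
    rw [hQ]
    simp only [hN]
    rw [Finset.sum_comm]
    refine Finset.sum_congr rfl fun l _ => ?_
    cases B y l <;> simp [Fintype.sum_bool]
  have hMQ : ∀ c d x, ∑ a : Bool, M a c d x = Q c d := by
    intro c d x
    rw [hQ]
    simp only [hM]
    rw [Finset.sum_comm]
    refine Finset.sum_congr rfl fun l _ => ?_
    cases A x l <;> simp [Fintype.sum_bool]
  have hKN : ∀ b c d x y, ∑ a : Bool, K a b c d x y = N b c d y := by
    intro b c d x y
    simp only [hK, hN]
    rw [Finset.sum_comm]
    refine Finset.sum_congr rfl fun l _ => ?_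
    cases A x l <;> simp [Fintype.sum_bool]
  have hKM : ∀ a c d x y, ∑ b : Bool, K a b c d x y = M a c d x := by
    intro a c d x y
    simp only [hK, hM]
    rw [Finset.sum_comm]
    refine Finset.sum_congr rfl fun l _ => ?_
    cases B y l <;> simp [Fintype.sum_bool]
  refine ⟨Q,
    (fun b c d y => if Q c d = 0 then 1/2 else N b c d y / Q c d),
    (fun a c d x => if Q c d = 0 then 1/2 else M a c d x / Q c d),
    (fun a b c d x y => if Q c d = 0 then 1/4 else K a b c d x y / Q c d),
    hQ0, ?_, ?_, ?_, ?_, ?_, ?_, ?_, ?_, ?_, ?_, ?_, ?_⟩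
  · -- normalization of Q
    rw [hQ]
    rw [tri_swap]
    rw [← hP1]
    exact Finset.sum_congr rfl fun l _ => hq1 l
  · -- Pb nonneg
    intro b c d y
    by_cases h : Q c d = 0
    · simp [h]
    · simp only [if_neg h]
      exact div_nonneg (hN0 b c d y) (hQ0 c d)
  · -- Pb normalization
    intro c d y
    by_cases h : Q c d = 0
    · simp [h, Fintype.sum_bool]
    · simp only [if_neg h]
      rw [← Finset.sum_div, hNQ, div_self h]
  · -- Pa nonneg
    intro a c d x
    by_cases h : Q c d = 0
    · simp [h]
    · simp only [if_neg h]
      exact div_nonneg (hM0 a c d x) (hQ0 c d)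
  · -- Pa normalization
    intro c d x
    by_cases h : Q c d = 0
    · simp [h, Fintype.sum_bool]
    · simp only [if_neg h]
      rw [← Finset.sum_div, hMQ, div_self h]
  · -- PNS nonneg
    intro a b c d x y
    by_cases h : Q c d = 0
    · simp [h]
    · simp only [if_neg h]
      exact div_nonneg (hK0 a b c d x y) (hQ0 c d)
  · -- PNS normalization
    intro c d x y
    by_cases h : Q c d = 0
    · norm_num [h, Fintype.sum_bool]
    · simp only [if_neg h]
      rw [show (∑ a : Bool, ∑ b : Bool, K a b c d x y / Q c d)
          = (∑ a : Bool, ∑ b : Bool, K a b c d x y) / Q c d from by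
        rw [Finset.sum_div]
        exact Finset.sum_congr rfl fun a _ => (Finset.sum_div _ _ _).symm]
      have : (∑ a : Bool, ∑ b : Bool, K a b c d x y) = Q c d := by
        rw [show (∑ a : Bool, ∑ b : Bool, K a b c d x y) = ∑ a : Bool, M a c d x from
          Finset.sum_congr rfl fun a _ => hKM a c d x y]
        exact hMQ c d x
      rw [this, div_self h]
  · -- NS in x
    intro b c d x x' y
    by_cases h : Q c d = 0
    · simp [h]
    · simp only [if_neg h]
      rw [← Finset.sum_div, ← Finset.sum_div, hKN, hKN]
  · -- NS in y
    intro a c d x y y'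
    by_cases h : Q c d = 0
    · simp [h]
    · simp only [if_neg h]
      rw [← Finset.sum_div, ← Finset.sum_div, hKM, hKM]
  · -- reconstruction x = 0
    intro a b y
    have hterm : ∀ c d, (if Q c d = 0 then (1:ℝ)/2 else N b c d y / Q c d) * Q c d
        = N b c d y := by
      intro c d
      by_cases h : Q c d = 0
      · rw [if_pos h, h, mul_zero, hNz b c d y h]
      · rw [if_neg h, div_mul_cancel₀ _ h]
    calc ℘ a b 0 y
        = ∑ l, (if a = A 0 l then (1:ℝ) else 0) * (if b = B y l then (1:ℝ) else 0) * P l :=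
          h℘ a b 0 y
      _ = ∑ l, ∑ d : Bool, q a d l * (if b = B y l then 1 else 0) := by
          refine Finset.sum_congr rfl fun l _ => ?_
          rw [← Finset.sum_mul, hqsumd a l]
          ring
      _ = ∑ d : Bool, N b a d y := by
          rw [Finset.sum_comm]
      _ = ∑ c : Bool, ∑ d : Bool, (if a = c then (1:ℝ) else 0) *
            (if Q c d = 0 then (1:ℝ)/2 else N b c d y / Q c d) * Q c d := by
          symm
          rw [Finset.sum_comm]
          refine Finset.sum_congr rfl fun d _ => ?_
          simp only [mul_assoc, hterm]
          simp only [ite_mul, one_mul, zero_mul, Finset.sum_ite_eq, Finset.mem_univ, if_true]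
  · -- reconstruction y = 0
    intro a b x
    have hterm : ∀ c d, (if Q c d = 0 then (1:ℝ)/2 else M a c d x / Q c d) * Q c d
        = M a c d x := by
      intro c d
      by_cases h : Q c d = 0
      · rw [if_pos h, h, mul_zero, hMz a c d x h]
      · rw [if_neg h, div_mul_cancel₀ _ h]
    calc ℘ a b x 0
        = ∑ l, (if a = A x l then (1:ℝ) else 0) * (if b = B 0 l then (1:ℝ) else 0) * P l :=
          h℘ a b x 0
      _ = ∑ l, ∑ c : Bool, q c b l * (if a = A x l then 1 else 0) := by
          refine Finset.sum_congr rfl fun l _ => ?_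
          rw [← Finset.sum_mul, hqsumc b l]
          ring
      _ = ∑ c : Bool, M a c b x := by
          rw [Finset.sum_comm]
      _ = ∑ c : Bool, ∑ d : Bool, (if b = d then (1:ℝ) else 0) *
            (if Q c d = 0 then (1:ℝ)/2 else M a c d x / Q c d) * Q c d := by
          simp only [mul_assoc, hterm]
          refine Finset.sum_congr rfl fun c _ => ?_
          simp only [ite_mul, one_mul, zero_mul, Finset.sum_ite_eq, Finset.mem_univ, if_true]
  · -- reconstruction NS
    intro a b x y hx hy
    have hterm : ∀ c d, (if Q c d = 0 then (1:ℝ)/4 else K a b c d x y / Q c d) * Q c d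
        = K a b c d x y := by
      intro c d
      by_cases h : Q c d = 0
      · rw [if_pos h, h, mul_zero, hKz a b c d x y h]
      · rw [if_neg h, div_mul_cancel₀ _ h]
    calc ℘ a b x y
        = ∑ l, (if a = A x l then (1:ℝ) else 0) * (if b = B y l then (1:ℝ) else 0) * P l :=
          h℘ a b x y
      _ = ∑ l, ∑ c : Bool, ∑ d : Bool,
            q c d l * (if a = A x l then 1 else 0) * (if b = B y l then 1 else 0) := by
          refine Finset.sum_congr rfl fun l _ => ?_
          simp only [← Finset.sum_mul]
          have hone : (∑ c : Bool, ∑ d : Bool,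
              ((if c = A 0 l then (1:ℝ) else 0) * if d = B 0 l then 1 else 0)) = 1 := by
            cases A 0 l <;> cases B 0 l <;> simp [Fintype.sum_bool]
          rw [hq1 l]
          ring
      _ = ∑ c : Bool, ∑ d : Bool, K a b c d x y := (tri_swap _).symm
      _ = ∑ c : Bool, ∑ d : Bool,
            (if Q c d = 0 then (1:ℝ)/4 else K a b c d x y / Q c d) * Q c d := by
          simp only [hterm]

/-- The witnessing extreme LF point: deterministic outcomes for setting 1,
a PR box on settings 2 and 3. -/
noncomputable def pExt : Bool → Bool → Fin 3 → Fin 3 → ℝ := fun a b x y =>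
  if x = 0 then
    (if a = true then (1:ℝ) else 0) *
      (if y = 0 then (if b = true then (1:ℝ) else 0) else 1/2)
  else if y = 0 then (if b = true then (1:ℝ) else 0) * (1/2)
  else if (xor a b) = (decide (x = 2) && decide (y = 2)) then 1/2 else 0

lemma pExt_isLF : IsLF pExt := by
  classical
  have h1 : ∀ c d : Bool, (0:ℝ) ≤ (if c = true then (1:ℝ) else 0) * (if d = true then (1:ℝ) else 0) := by
    intro c d; split_ifs <;> norm_num
  have h2 : ∑ c : Bool, ∑ d : Bool,
      (if c = true then (1:ℝ) else 0) * (if d = true then (1:ℝ) else 0) = 1 := by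
    simp [Fintype.sum_bool]
  have h3 : ∀ (b _c d : Bool) (y : Fin 3),
      (0:ℝ) ≤ if y = 0 then (if b = d then (1:ℝ) else 0) else 1/2 := by
    intro b _c d y; split_ifs <;> norm_num
  have h4 : ∀ (_c d : Bool) (y : Fin 3),
      ∑ b : Bool, (if y = 0 then (if b = d then (1:ℝ) else 0) else 1/2) = 1 := by
    intro _c d y
    by_cases h : y = 0
    · cases d <;> simp [h, Fintype.sum_bool]
    · simp [h, Fintype.sum_bool]
  have h7 : ∀ (a b _c _d : Bool) (x y : Fin 3),
      (0:ℝ) ≤ if (xor a b) = (decide (x = 2) && decide (y = 2)) then (1:ℝ)/2 else 0 := by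
    intro a b _c _d x y; split_ifs <;> norm_num
  have h8 : ∀ (_c _d : Bool) (x y : Fin 3), ∑ a : Bool, ∑ b : Bool,
      (if (xor a b) = (decide (x = 2) && decide (y = 2)) then (1:ℝ)/2 else 0) = 1 := by
    intro _c _d x y
    cases hx : decide (x = 2) <;> cases hy : decide (y = 2) <;>
      norm_num [Fintype.sum_bool]
  have h9 : ∀ (b _c _d : Bool) (x x' y : Fin 3),
      ∑ a : Bool, (if (xor a b) = (decide (x = 2) && decide (y = 2)) then (1:ℝ)/2 else 0)
      = ∑ a : Bool, (if (xor a b) = (decide (x' = 2) && decide (y = 2)) then (1:ℝ)/2 else 0) := by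
    intro b _c _d x x' y
    cases b <;> cases hx : decide (x = 2) <;> cases hx' : decide (x' = 2) <;>
      cases hy : decide (y = 2) <;> norm_num [Fintype.sum_bool]
  have h10 : ∀ (a _c _d : Bool) (x y y' : Fin 3),
      ∑ b : Bool, (if (xor a b) = (decide (x = 2) && decide (y = 2)) then (1:ℝ)/2 else 0)
      = ∑ b : Bool, (if (xor a b) = (decide (x = 2) && decide (y' = 2)) then (1:ℝ)/2 else 0) := by
    intro a _c _d x y y'
    cases a <;> cases hx : decide (x = 2) <;> cases hy : decide (y = 2) <;>
      cases hy' : decide (y' = 2) <;> norm_num [Fintype.sum_bool]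
  have h11 : ∀ (a b : Bool) (y : Fin 3), pExt a b 0 y
      = ∑ c : Bool, ∑ d : Bool, (if a = c then (1:ℝ) else 0) *
        (if y = 0 then (if b = d then (1:ℝ) else 0) else 1/2) *
        ((if c = true then (1:ℝ) else 0) * (if d = true then (1:ℝ) else 0)) := by
    intro a b y
    by_cases h : y = 0 <;> cases a <;> cases b <;> simp [pExt, h, Fintype.sum_bool]
  have h12 : ∀ (a b : Bool) (x : Fin 3), pExt a b x 0
      = ∑ c : Bool, ∑ d : Bool, (if b = d then (1:ℝ) else 0) *
        (if x = 0 then (if a = c then (1:ℝ) else 0) else 1/2) *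
        ((if c = true then (1:ℝ) else 0) * (if d = true then (1:ℝ) else 0)) := by
    intro a b x
    by_cases h : x = 0 <;> cases a <;> cases b <;> simp [pExt, h, Fintype.sum_bool]
  have h13 : ∀ (a b : Bool) (x y : Fin 3), x ≠ 0 → y ≠ 0 → pExt a b x y
      = ∑ c : Bool, ∑ d : Bool,
        (if (xor a b) = (decide (x = 2) && decide (y = 2)) then (1:ℝ)/2 else 0) *
        ((if c = true then (1:ℝ) else 0) * (if d = true then (1:ℝ) else 0)) := by
    intro a b x y hx hy
    have hL : pExt a b x y
        = if (xor a b) = (decide (x = 2) && decide (y = 2)) then (1:ℝ)/2 else 0 := by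
      simp [pExt, hx, hy]
    rw [hL]
    simp [Fintype.sum_bool]
  exact ⟨fun c d => (if c = true then (1:ℝ) else 0) * (if d = true then (1:ℝ) else 0),
    fun b c d y => if y = 0 then (if b = d then (1:ℝ) else 0) else 1/2,
    fun a c d x => if x = 0 then (if a = c then (1:ℝ) else 0) else 1/2,
    fun a b c d x y => if (xor a b) = (decide (x = 2) && decide (y = 2)) then (1:ℝ)/2 else 0,
    h1, h2, h3, h4, (fun a c d x => h3 a d c x), (fun c d x => h4 d c x),
    h7, h8, h9, h10, h11, h12, h13⟩

lemma pExt_not_lhv : ¬ IsLHV pExt := by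
  rintro ⟨m, P, A, B, hP0, hP1, h℘⟩
  have : ∃ l, P l ≠ 0 := by
    by_contra h
    push_neg at h
    rw [Finset.sum_eq_zero (fun l _ => h l)] at hP1
    norm_num at hP1
  obtain ⟨l₀, hl₀⟩ := this
  have key : ∀ a b (x y : Fin 3), pExt a b x y = 0 → ¬ (a = A x l₀ ∧ b = B y l₀) := by
    rintro a b x y h0 ⟨ha, hb⟩
    have hsum := (h℘ a b x y).symm.trans h0
    have hterm := (Finset.sum_eq_zero_iff_of_nonneg (fun l _ => by
      have := hP0 l; split_ifs <;> simp [this])).mp hsum l₀ (Finset.mem_univ l₀)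
    rw [if_pos ha, if_pos hb, one_mul, one_mul] at hterm
    exact hl₀ hterm
  have z1 := key true false 1 1 (by simp [pExt])
  have z2 := key false true 1 1 (by simp [pExt])
  have z3 := key true false 1 2 (by simp [pExt])
  have z4 := key false true 1 2 (by simp [pExt])
  have z5 := key true false 2 1 (by simp [pExt])
  have z6 := key false true 2 1 (by simp [pExt])
  have z7 := key true true 2 2 (by simp [pExt])
  have z8 := key false false 2 2 (by simp [pExt])
  clear key h℘ hP1 hP0 hl₀
  revert z1 z2 z3 z4 z5 z6 z7 z8
  cases hA1 : A 1 l₀ <;> cases hB1 : B 1 l₀ <;> cases hA2 : A 2 l₀ <;> cases hB2 : B 2 l₀ <;>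
    decide

end Aux

/-- In the 3-setting, 2-outcome bipartite scenario, the LF
correlations form a strict superset of the LHV correlations: every LHV
correlation is LF, and some LF correlation is not LHV. -/
theorem lf_strict_superset_of_lhv :
    (∀ ℘ : Bool → Bool → Fin 3 → Fin 3 → ℝ, IsLHV ℘ → IsLF ℘) ∧
    (∃ ℘ : Bool → Bool → Fin 3 → Fin 3 → ℝ, IsLF ℘ ∧ ¬ IsLHV ℘) := by
  exact ⟨lhv_isLF, pExt, pExt_isLF, pExt_not_lhv⟩
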